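/- Let X_1,…,X_n be independent, g_i Borel functions with E g_i(X_i) = 0 and Σ E g_i(X_i)^2 = 1, W = Σ g_i(X_i), T = W + Δ, and β = Σ_{i=1}^n E[ g_i(X_i)^2 1{|g_i(X_i)|>1} ] + Σ_{i=1}^n E[ |g_i(X_i)|^3 1{|g_i(X_i)|≤1} ]. With Δ_i as in Theorem 2.1 (X_i independent of (Δ_i, W − g_i(X_i))), one has sup_z |P(T ≤ z) − P(W ≤ z)| ≤ 2β + E|WΔ| + Σ_{i=1}^n E|g_i(X_i)(Δ − Δ_i)|. -/

import Mathlib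

open MeasureTheory ProbabilityTheory

noncomputable def clampCS (z δ u v w : ℝ) : ℝ := min (max (w - z) (-(u + δ))) (v + δ)

lemma clampCS_le_upper (z δ u v w : ℝ) : clampCS z δ u v w ≤ v + δ := min_le_right _ _

lemma clampCS_lower (z δ u v w : ℝ) (hu : 0 ≤ u) (hv : 0 ≤ v) (hδ : 0 ≤ δ) :
    -(u + δ) ≤ clampCS z δ u v w :=
  le_min (le_max_right _ _) (by linarith)

lemma clampCS_mono_w (z δ u v : ℝ) {w w' : ℝ} (h : w ≤ w') :
    clampCS z δ u v w ≤ clampCS z δ u v w' :=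
  min_le_min (max_le_max (by linarith) le_rfl) le_rfl

lemma clampCS_mono_v (z δ u : ℝ) {v v' : ℝ} (h : v ≤ v') (w : ℝ) :
    clampCS z δ u v w ≤ clampCS z δ u v' w :=
  min_le_min le_rfl (by linarith)

lemma clampCS_v_upper (z δ u : ℝ) {v v' : ℝ} (h : v' ≤ v) (w : ℝ) :
    clampCS z δ u v w ≤ clampCS z δ u v' w + (v - v') := by
  unfold clampCS
  rcases le_total (max (w - z) (-(u + δ))) (v' + δ) with h' | h'
  · rw [min_eq_left h', min_eq_left (by linarith : max (w - z) (-(u + δ)) ≤ v + δ)]; linarith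
  · rw [min_eq_right h']
    have := min_le_right (max (w - z) (-(u + δ))) (v + δ)
    linarith

lemma clampCS_anti_u (z δ v : ℝ) {u u' : ℝ} (h : u' ≤ u) (w : ℝ) :
    clampCS z δ u v w ≤ clampCS z δ u' v w :=
  min_le_min (max_le_max le_rfl (by linarith)) le_rfl

lemma clampCS_u_lower (z δ v : ℝ) {u u' : ℝ} (h : u' ≤ u) (w : ℝ) :
    clampCS z δ u' v w - (u - u') ≤ clampCS z δ u v w := by
  unfold clampCS
  rcases le_total (w - z) (-(u + δ)) with h' | h'
  · rw [max_eq_right h']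
    have h2 : max (w - z) (-(u' + δ)) = -(u' + δ) := max_eq_right (by linarith)
    rw [h2]
    rcases le_total (-(u' + δ)) (v + δ) with h3 | h3
    · rw [min_eq_left h3]
      have := min_le_left (-(u + δ)) (v + δ)
      have h4 : -(u+δ) ≤ v + δ := by linarith
      rw [min_eq_left h4]; linarith
    · rw [min_eq_right h3]
      have : min (-(u+δ)) (v+δ) = -(u+δ) ∨ min (-(u+δ)) (v+δ) = v+δ := min_choice _ _
      rcases this with h5 | h5 <;> rw [h5] <;> linarith
  · rw [max_eq_left h']
    have h2 : max (w - z) (-(u' + δ)) ≤ max (w-z) (-(u'+δ)) := le_rfl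
    have h3 : max (w - z) (-(u' + δ)) = w - z ∨ max (w - z) (-(u' + δ)) = -(u'+δ) := max_choice _ _
    rcases h3 with h3 | h3 <;> rw [h3]
    · linarith [min_le_min (le_refl (w-z)) (le_refl (v+δ))]
    · rcases le_total (w-z) (v+δ) with h4 | h4
      · rw [min_eq_left h4]
        rcases le_total (-(u'+δ)) (v+δ) with h5 | h5
        · rw [min_eq_left h5]; linarith
        · rw [min_eq_right h5]; linarith
      · rw [min_eq_right h4]
        rcases le_total (-(u'+δ)) (v+δ) with h5 | h5
        · rw [min_eq_left h5]; linarith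
        · rw [min_eq_right h5]; linarith

/-- The centered test function. -/
noncomputable def steinF (z δ u v w : ℝ) : ℝ := clampCS z δ u v w - (v - u) / 2

lemma steinF_abs_le (z δ u v w : ℝ) (hu : 0 ≤ u) (hv : 0 ≤ v) (hδ : 0 ≤ δ) :
    |steinF z δ u v w| ≤ (u + v + 2 * δ) / 2 := by
  have h1 := clampCS_le_upper z δ u v w
  have h2 := clampCS_lower z δ u v w hu hv hδ
  rw [abs_le]; unfold steinF; constructor <;> linarith

lemma steinF_lip (z δ : ℝ) (u v u' v' w : ℝ) :
    |steinF z δ u v w - steinF z δ u' v' w| ≤ (|u - u'| + |v - v'|) / 2 := by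
  have hv : ∀ a b : ℝ, |steinF z δ u a w - steinF z δ u b w| ≤ |a - b| / 2 := by
    intro a b
    rcases le_total a b with h | h
    · have h1 := clampCS_mono_v z δ u h w
      have h2 := clampCS_v_upper z δ u h w
      rw [abs_of_nonpos (by linarith : a - b ≤ 0), abs_le]
      constructor <;> (unfold steinF; linarith)
    · have h1 := clampCS_mono_v z δ u h w
      have h2 := clampCS_v_upper z δ u h w
      rw [abs_of_nonneg (by linarith : (0:ℝ) ≤ a - b), abs_le]
      constructor <;> (unfold steinF; linarith)
  have hu : ∀ a b : ℝ, |steinF z δ a v' w - steinF z δ b v' w| ≤ |a - b| / 2 := by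
    intro a b
    rcases le_total a b with h | h
    · have h1 := clampCS_anti_u z δ v' h w
      have h2 := clampCS_u_lower z δ v' h w
      rw [abs_of_nonpos (by linarith : a - b ≤ 0), abs_le]
      constructor <;> (unfold steinF; linarith)
    · have h1 := clampCS_anti_u z δ v' h w
      have h2 := clampCS_u_lower z δ v' h w
      rw [abs_of_nonneg (by linarith : (0:ℝ) ≤ a - b), abs_le]
      constructor <;> (unfold steinF; linarith)
  calc |steinF z δ u v w - steinF z δ u' v' w|
      ≤ |steinF z δ u v w - steinF z δ u v' w| + |steinF z δ u v' w - steinF z δ u' v' w| :=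
        abs_sub_le _ _ _
    _ ≤ |v - v'| / 2 + |u - u'| / 2 := add_le_add (hv v v') (hu u u')
    _ = (|u - u'| + |v - v'|) / 2 := by ring


lemma clampCS_nonneg_gain (z δ u v : ℝ) (w t : ℝ) :
    0 ≤ t * (clampCS z δ u v w - clampCS z δ u v (w - t)) := by
  rcases le_total 0 t with ht | ht
  · exact mul_nonneg ht (by linarith [clampCS_mono_w z δ u v (by linarith : w - t ≤ w)])
  · have := clampCS_mono_w z δ u v (by linarith : w ≤ w - t)
    have h2 : clampCS z δ u v w - clampCS z δ u v (w - t) ≤ 0 := by linarith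
    nlinarith

lemma clampCS_gain (z δ u v w : ℝ) (hδ : 0 < δ) (h1 : z - u < w) (h2 : w ≤ z + v) (t : ℝ) :
    |t| * min |t| δ ≤ t * (clampCS z δ u v w - clampCS z δ u v (w - t)) := by
  have hcw : clampCS z δ u v w = w - z := by
    unfold clampCS
    rw [max_eq_left (by linarith), min_eq_left (by linarith)]
  rcases le_total 0 t with ht | ht
  · have h1' : clampCS z δ u v (w - t) ≤ max (w - t - z) (-(u + δ)) := min_le_left _ _
    have h3 : min t δ ≤ clampCS z δ u v w - clampCS z δ u v (w - t) := by
      rcases le_total (w - t - z) (-(u + δ)) with h | h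
      · rw [max_eq_right h] at h1'
        have : min t δ ≤ δ := min_le_right _ _
        linarith
      · rw [max_eq_left h] at h1'
        have : min t δ ≤ t := min_le_left _ _
        linarith
    rw [abs_of_nonneg ht]
    exact mul_le_mul_of_nonneg_left h3 ht
  · have h1' : min (w - t - z) (v + δ) ≤ clampCS z δ u v (w - t) :=
      min_le_min (le_max_left _ _) le_rfl
    have h3 : min (-t) δ ≤ clampCS z δ u v (w - t) - clampCS z δ u v w := by
      rcases le_total (w - t - z) (v + δ) with h | h
      · rw [min_eq_left h] at h1'
        have : min (-t) δ ≤ -t := min_le_left _ _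
        linarith
      · rw [min_eq_right h] at h1'
        have : min (-t) δ ≤ δ := min_le_right _ _
        linarith
    rw [abs_of_nonpos ht]
    have := mul_le_mul_of_nonneg_left h3 (by linarith : (0:ℝ) ≤ -t)
    nlinarith

lemma steinF_gain_if (z δ u v : ℝ) (hδ : 0 < δ) (w t : ℝ) :
    (if z - u < w ∧ w ≤ z + v then (1:ℝ) else 0) * (|t| * min |t| δ)
      ≤ t * (steinF z δ u v w - steinF z δ u v (w - t)) := by
  have heq : t * (steinF z δ u v w - steinF z δ u v (w - t))
      = t * (clampCS z δ u v w - clampCS z δ u v (w - t)) := by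
    unfold steinF; ring
  rw [heq]
  split_ifs with h
  · simpa using clampCS_gain z δ u v w hδ h.1 h.2 t
  · simpa using clampCS_nonneg_gain z δ u v w t

lemma pw_hlow (δ x : ℝ) (hδ : 0 < δ) :
    4*δ*x^2 ≤ 4*δ*(|x| * min |x| δ) + 4*δ*(x^2 * (if 1 < |x| then 1 else 0))
      + |x|^3 * (if |x| ≤ 1 then 1 else 0) := by
  rcases le_or_gt |x| 1 with h1 | h1
  · rw [if_neg (by linarith), if_pos h1]
    rcases le_total |x| δ with h2 | h2
    · rw [min_eq_left h2]
      nlinarith [abs_nonneg x, sq_abs x, pow_nonneg (abs_nonneg x) 3]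
    · rw [min_eq_right h2]
      nlinarith [abs_nonneg x, sq_abs x, sq_nonneg (|x| - 2*δ)]
  · rw [if_pos h1, if_neg (by linarith)]
    have h0 : (0:ℝ) ≤ min |x| δ := le_min (abs_nonneg x) hδ.le
    nlinarith [mul_nonneg (abs_nonneg x) h0, hδ]

lemma pw_hsq (δ x : ℝ) (hδ : 0 < δ) :
    (|x| * min |x| δ)^2 ≤ δ*(|x|^3 * (if |x| ≤ 1 then 1 else 0))
      + δ^2*(x^2 * (if 1 < |x| then 1 else 0)) := by
  have h0 : (0:ℝ) ≤ min |x| δ := le_min (abs_nonneg x) hδ.le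
  have hl : min |x| δ ≤ |x| := min_le_left _ _
  have hr : min |x| δ ≤ δ := min_le_right _ _
  have key : (|x| * min |x| δ)^2 = |x|^2 * (min |x| δ * min |x| δ) := by ring
  rcases le_or_gt |x| 1 with h1 | h1
  · rw [if_pos h1, if_neg (by linarith)]
    have s1 : min |x| δ * min |x| δ ≤ δ * min |x| δ := mul_le_mul_of_nonneg_right hr h0
    have s2 : δ * min |x| δ ≤ δ * |x| := mul_le_mul_of_nonneg_left hl hδ.le
    have s3 : |x|^2 * (min |x| δ * min |x| δ) ≤ |x|^2 * (δ * |x|) :=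
      mul_le_mul_of_nonneg_left (by linarith) (sq_nonneg _)
    have s4 : |x|^2 * (δ * |x|) = δ * (|x|^3 * 1) := by ring
    linarith [key, s3, s4.le]
  · rw [if_neg (by linarith), if_pos h1]
    have s1 : min |x| δ * min |x| δ ≤ δ * δ := by nlinarith
    have s3 : |x|^2 * (min |x| δ * min |x| δ) ≤ |x|^2 * (δ * δ) :=
      mul_le_mul_of_nonneg_left s1 (sq_nonneg _)
    have s4 : |x|^2 * (δ * δ) = δ^2 * (|x|^2 * 1) := by ring
    rw [key]
    calc |x|^2 * (min |x| δ * min |x| δ) ≤ δ^2 * (|x|^2 * 1) := by linarith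
      _ = δ * (|x| ^ 3 * 0) + δ^2 * (x^2 * 1) := by rw [sq_abs]; ring

lemma pw_amgm (s y : ℝ) : 2*s*|y| ≤ y^2 + s^2 := by
  nlinarith [sq_nonneg (|y| - s), sq_abs y]

lemma pw_pos_part (y : ℝ) : max y 0 = (|y| + y)/2 := by
  rcases le_total 0 y with h | h
  · rw [max_eq_left h, abs_of_nonneg h]; ring
  · rw [max_eq_right h, abs_of_nonpos h]; ring

lemma pw_abs_le_sq (x : ℝ) : |x| ≤ (x^2+1)/2 := by
  nlinarith [sq_nonneg (|x| - 1), sq_abs x]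

lemma trunc_lip (M a b : ℝ) : |min (max a 0) M - min (max b 0) M| ≤ |a - b| := by
  calc |min (max a 0) M - min (max b 0) M|
      ≤ max |max a 0 - max b 0| |M - M| := abs_min_sub_min_le_max _ _ _ _
    _ = |max a 0 - max b 0| := by rw [sub_self, abs_zero]; exact max_eq_left (abs_nonneg _)
    _ ≤ |a - b| := abs_max_sub_max_le_abs _ _ _

set_option maxHeartbeats 2000000 in
lemma concentration_core {Ω : Type*} [MeasurableSpace Ω] (μ : Measure Ω)
    [IsProbabilityMeasure μ] (n : ℕ) (X : Fin n → Ω → ℝ) (g : Fin n → ℝ → ℝ)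
    (hmeasX : ∀ i, Measurable (X i)) (hmeasg : ∀ i, Measurable (g i))
    (hindep : iIndepFun X μ)
    (hint : ∀ i, Integrable (fun ω => g i (X i ω)) μ)
    (hint2 : ∀ i, Integrable (fun ω => (g i (X i ω)) ^ 2) μ)
    (hint3 : ∀ i, Integrable (fun ω => |g i (X i ω)| ^ 3) μ)
    (hmean : ∀ i, ∫ ω, g i (X i ω) ∂μ = 0)
    (hvar : ∑ i, ∫ ω, (g i (X i ω)) ^ 2 ∂μ = 1)
    (W : Ω → ℝ) (hW : ∀ ω, W ω = ∑ i, g i (X i ω))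
    (β : ℝ)
    (hβ : β = (∑ i, ∫ ω, (g i (X i ω)) ^ 2 *
          (if |g i (X i ω)| > 1 then (1 : ℝ) else 0) ∂μ) +
        ∑ i, ∫ ω, |g i (X i ω)| ^ 3 *
          (if |g i (X i ω)| ≤ 1 then (1 : ℝ) else 0) ∂μ)
    (hβpos : 0 < β) (hβle : β ≤ 1/2)
    (z M : ℝ) (hM0 : 0 ≤ M)
    (U V : Ω → ℝ) (hUm : Measurable U) (hVm : Measurable V)
    (hU0 : ∀ ω, 0 ≤ U ω) (hV0 : ∀ ω, 0 ≤ V ω) (hUM : ∀ ω, U ω ≤ M) (hVM : ∀ ω, V ω ≤ M)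
    (Ui Vi : Fin n → Ω → ℝ) (hUim : ∀ i, Measurable (Ui i)) (hVim : ∀ i, Measurable (Vi i))
    (hUi0 : ∀ i ω, 0 ≤ Ui i ω) (hVi0 : ∀ i ω, 0 ≤ Vi i ω)
    (hUiM : ∀ i ω, Ui i ω ≤ M) (hViM : ∀ i ω, Vi i ω ≤ M)
    (hindUV : ∀ i, IndepFun (X i)
      (fun ω => (Ui i ω, Vi i ω, W ω - g i (X i ω))) μ) :
    (μ {ω | z - U ω < W ω ∧ W ω ≤ z + V ω}).toReal ≤
      2*β + ∫ ω, (U ω + V ω) * |W ω| ∂μ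
        + ∑ i, ∫ ω, (|U ω - Ui i ω| + |V ω - Vi i ω|) * |g i (X i ω)| ∂μ := by
  -- basic notation
  set ξ : Fin n → Ω → ℝ := fun i ω => g i (X i ω) with hξdef
  have hξm : ∀ i, Measurable (ξ i) := fun i => (hmeasg i).comp (hmeasX i)
  set δ : ℝ := β/2 with hδdef
  have hδpos : 0 < δ := by positivity
  have hδ1 : δ ≤ 1 := by rw [hδdef]; linarith
  have hWeq : W = fun ω => ∑ i, ξ i ω := funext hW
  have hWm : Measurable W := by
    rw [hWeq]; exact Finset.measurable_sum _ (fun i _ => hξm i)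
  have hWint : Integrable W μ := by
    rw [hWeq]; exact integrable_finset_sum _ (fun i _ => hint i)
  -- second moment of W
  have intPair : ∀ i j, Integrable (fun ω => ξ i ω * ξ j ω) μ := by
    intro i j
    rcases eq_or_ne i j with rfl | hij
    · simpa [pow_two] using hint2 i
    · exact ((hindep.indepFun hij).comp (hmeasg i) (hmeasg j)).integrable_mul
        (hint i) (hint j)
  have EPair : ∀ i j, i ≠ j → ∫ ω, ξ i ω * ξ j ω ∂μ = 0 := by
    intro i j hij
    have h2 := ((hindep.indepFun hij).comp (hmeasg i) (hmeasg j)).integral_mul_eq_mul_integral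
        (hint i).aestronglyMeasurable (hint j).aestronglyMeasurable
    have h3 : ∫ ω, ξ i ω * ξ j ω ∂μ = integral μ ((g i ∘ X i) * (g j ∘ X j)) := rfl
    have h4 : integral μ (g i ∘ X i) = 0 := hmean i
    rw [h3, h2, h4, zero_mul]
  have hW2eq : (fun ω => (W ω)^2) = fun ω => ∑ i, ∑ j, ξ i ω * ξ j ω := by
    funext ω
    rw [hW ω, pow_two, Finset.sum_mul_sum]
  have intW2 : Integrable (fun ω => (W ω)^2) μ := by
    rw [hW2eq]
    exact integrable_finset_sum _ (fun i _ => integrable_finset_sum _ (fun j _ => intPair i j))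
  have EW2 : ∫ ω, (W ω)^2 ∂μ = 1 := by
    rw [hW2eq, integral_finset_sum _ (fun i _ => integrable_finset_sum _ (fun j _ => intPair i j))]
    have : ∀ i : Fin n, ∫ ω, (∑ j, ξ i ω * ξ j ω) ∂μ = ∫ ω, (ξ i ω)^2 ∂μ := by
      intro i
      rw [integral_finset_sum _ (fun j _ => intPair i j)]
      rw [Finset.sum_eq_single i (fun j _ hj => EPair i j (Ne.symm hj)) (by simp)]
      congr 1; funext ω; rw [pow_two]
    calc ∑ i, ∫ ω, (∑ j, ξ i ω * ξ j ω) ∂μ = ∑ i, ∫ ω, (ξ i ω)^2 ∂μ := by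
          exact Finset.sum_congr rfl (fun i _ => this i)
      _ = 1 := hvar
  have hEW1 : ∫ ω, |W ω| ∂μ ≤ 1 := by
    have hmono := integral_mono hWint.abs ((intW2.add (integrable_const 1)).div_const 2)
      (fun ω => pw_abs_le_sq (W ω))
    have hval : ∫ ω, ((W ω)^2 + 1)/2 ∂μ = 1 := by
      rw [integral_div, integral_add intW2 (integrable_const (1:ℝ)), EW2, integral_const]
      simp
    exact le_trans hmono (le_of_eq hval)
  -- the h functions
  set h : Fin n → Ω → ℝ := fun i ω => |ξ i ω| * min (|ξ i ω|) δ with hhdef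
  have hh0 : ∀ i ω, 0 ≤ h i ω :=
    fun i ω => mul_nonneg (abs_nonneg _) (le_min (abs_nonneg _) hδpos.le)
  have hhm : ∀ i, Measurable (h i) :=
    fun i => ((hξm i).abs).mul (((hξm i).abs).min measurable_const)
  have hhle : ∀ i ω, h i ω ≤ δ * |ξ i ω| := by
    intro i ω
    calc h i ω ≤ |ξ i ω| * δ :=
          mul_le_mul_of_nonneg_left (min_le_right _ _) (abs_nonneg _)
      _ = δ * |ξ i ω| := mul_comm _ _
  have hint_h : ∀ i, Integrable (h i) μ := by
    intro i
    refine Integrable.mono ((hint i).abs.const_mul δ) ((hhm i).aestronglyMeasurable) ?_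
    refine Filter.Eventually.of_forall (fun ω => ?_)
    rw [Real.norm_eq_abs, Real.norm_eq_abs, abs_of_nonneg (hh0 i ω),
      abs_of_nonneg (by positivity : (0:ℝ) ≤ δ * |ξ i ω|)]
    exact hhle i ω
  have hint_hsq : ∀ i, Integrable (fun ω => (h i ω)^2) μ := by
    intro i
    refine Integrable.mono ((hint2 i).const_mul (δ^2))
      (((hhm i).pow_const 2).aestronglyMeasurable) ?_
    refine Filter.Eventually.of_forall (fun ω => ?_)
    rw [Real.norm_eq_abs, Real.norm_eq_abs, abs_of_nonneg (by positivity : (0:ℝ) ≤ (h i ω)^2)]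
    have h2 : (h i ω)^2 ≤ (δ * |ξ i ω|)^2 := pow_le_pow_left₀ (hh0 i ω) (hhle i ω) 2
    have h3 : (δ * |ξ i ω|)^2 = δ^2 * (ξ i ω)^2 := by rw [mul_pow, sq_abs]
    rw [h3] at h2
    calc (h i ω)^2 ≤ δ^2 * (ξ i ω)^2 := h2
      _ ≤ |δ^2 * (ξ i ω)^2| := le_abs_self _
  -- truncated moment quantities
  have intT2 : ∀ i, Integrable
      (fun ω => (g i (X i ω))^2 * (if |g i (X i ω)| > 1 then (1:ℝ) else 0)) μ := by
    intro i
    refine Integrable.mono (hint2 i) ?_ ?_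
    · exact (((hmeasg i).comp (hmeasX i)).pow_const 2).mul
        (Measurable.ite (measurableSet_lt measurable_const
          (((hmeasg i).comp (hmeasX i)).abs)) measurable_const measurable_const)
        |>.aestronglyMeasurable
    · refine Filter.Eventually.of_forall (fun ω => ?_)
      rw [Real.norm_eq_abs, Real.norm_eq_abs]
      split_ifs with hc <;> simp [abs_mul, abs_of_nonneg (sq_nonneg (g i (X i ω)))] <;> positivity
  have intT3 : ∀ i, Integrable
      (fun ω => |g i (X i ω)|^3 * (if |g i (X i ω)| ≤ 1 then (1:ℝ) else 0)) μ := by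
    intro i
    refine Integrable.mono (hint3 i) ?_ ?_
    · exact ((((hmeasg i).comp (hmeasX i)).abs.pow_const 3).mul
        (Measurable.ite (measurableSet_le (((hmeasg i).comp (hmeasX i)).abs)
          measurable_const) measurable_const measurable_const)).aestronglyMeasurable
    · refine Filter.Eventually.of_forall (fun ω => ?_)
      rw [Real.norm_eq_abs, Real.norm_eq_abs]
      split_ifs with hc <;>
        simp [abs_mul, abs_of_nonneg (pow_nonneg (abs_nonneg (g i (X i ω))) 3)] <;> positivity
  obtain ⟨B2, hB2⟩ : ∃ B2 : ℝ, B2 = ∑ i, ∫ ω, (g i (X i ω))^2 *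
      (if |g i (X i ω)| > 1 then (1:ℝ) else 0) ∂μ := ⟨_, rfl⟩
  obtain ⟨B3, hB3⟩ : ∃ B3 : ℝ, B3 = ∑ i, ∫ ω, |g i (X i ω)|^3 *
      (if |g i (X i ω)| ≤ 1 then (1:ℝ) else 0) ∂μ := ⟨_, rfl⟩
  have hβ23 : β = B2 + B3 := by rw [hβ, hB2, hB3]
  have hB2nn : 0 ≤ B2 := by
    rw [hB2]
    refine Finset.sum_nonneg (fun i _ => integral_nonneg (fun ω => ?_))
    refine mul_nonneg (sq_nonneg _) ?_
    split_ifs <;> norm_num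
  have hB3nn : 0 ≤ B3 := by
    rw [hB3]
    refine Finset.sum_nonneg (fun i _ => integral_nonneg (fun ω => ?_))
    refine mul_nonneg (by positivity) ?_
    split_ifs <;> norm_num
  -- expectation of h i
  set Eh : Fin n → ℝ := fun i => ∫ ω, h i ω ∂μ with hEhdef
  set EH : ℝ := ∑ i, Eh i with hEHdef
  have hEHhalf : 1/2 ≤ EH := by
    have perI : ∀ i : Fin n, 4*δ*(∫ ω, (g i (X i ω))^2 ∂μ) ≤
        4*δ*(Eh i) + 4*δ*(∫ ω, (g i (X i ω))^2 * (if |g i (X i ω)| > 1 then (1:ℝ) else 0) ∂μ)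
          + ∫ ω, |g i (X i ω)|^3 * (if |g i (X i ω)| ≤ 1 then (1:ℝ) else 0) ∂μ := by
      intro i
      have i1 : Integrable (fun ω => 4*δ*(h i ω)) μ := (hint_h i).const_mul _
      have i2 : Integrable (fun ω => 4*δ*((g i (X i ω))^2 *
          (if |g i (X i ω)| > 1 then (1:ℝ) else 0))) μ := (intT2 i).const_mul _
      have i12 : Integrable (fun ω => 4*δ*(h i ω) + 4*δ*((g i (X i ω))^2 *
          (if |g i (X i ω)| > 1 then (1:ℝ) else 0))) μ := by exact i1.add i2
      have iRHS : Integrable (fun ω => 4*δ*(h i ω) + 4*δ*((g i (X i ω))^2 *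
          (if |g i (X i ω)| > 1 then (1:ℝ) else 0))
          + |g i (X i ω)|^3 * (if |g i (X i ω)| ≤ 1 then (1:ℝ) else 0)) μ := by
        exact i12.add (intT3 i)
      have hmono := integral_mono ((hint2 i).const_mul (4*δ)) iRHS
        (fun ω => pw_hlow δ (g i (X i ω)) hδpos)
      rw [integral_const_mul] at hmono
      rw [integral_add i12 (intT3 i), integral_add i1 i2,
        integral_const_mul, integral_const_mul] at hmono
      exact hmono
    have hsum : 4*δ*1 ≤ 4*δ*EH + 4*δ*B2 + B3 := by
      have := Finset.sum_le_sum (fun i (_ : i ∈ Finset.univ) => perI i)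
      rw [← Finset.mul_sum, hvar] at this
      rw [hEHdef, hB2, hB3]
      calc 4*δ*1 ≤ ∑ i, (4*δ*(Eh i) + 4*δ*(∫ ω, (g i (X i ω))^2 *
            (if |g i (X i ω)| > 1 then (1:ℝ) else 0) ∂μ)
            + ∫ ω, |g i (X i ω)|^3 * (if |g i (X i ω)| ≤ 1 then (1:ℝ) else 0) ∂μ) := this
        _ = 4*δ*(∑ i, Eh i) + 4*δ*(∑ i, ∫ ω, (g i (X i ω))^2 *
            (if |g i (X i ω)| > 1 then (1:ℝ) else 0) ∂μ)
            + ∑ i, ∫ ω, |g i (X i ω)|^3 * (if |g i (X i ω)| ≤ 1 then (1:ℝ) else 0) ∂μ := by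
          rw [Finset.sum_add_distrib, Finset.sum_add_distrib, Finset.mul_sum, Finset.mul_sum]
    have hδβ : δ = β/2 := hδdef
    nlinarith [hβpos, hβle, hB2nn, hB3nn]
  -- variance bound for H
  set D : Ω → ℝ := fun ω => ∑ i, (Eh i - h i ω) with hDdef
  have int_a : ∀ i : Fin n, Integrable (fun ω => Eh i - h i ω) μ :=
    fun i => (integrable_const (Eh i)).sub (hint_h i)
  have intD : Integrable D μ := by
    rw [hDdef]; exact integrable_finset_sum _ (fun i _ => int_a i)
  have int_aa : ∀ i j : Fin n, Integrable (fun ω => (Eh i - h i ω) * (Eh j - h j ω)) μ := by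
    intro i j
    rcases eq_or_ne i j with rfl | hij
    · have hexp : (fun ω => (Eh i - h i ω) * (Eh i - h i ω))
          = fun ω => (h i ω)^2 - (2*Eh i)*(h i ω) + (Eh i)^2 := by
        funext ω; ring
      rw [hexp]
      exact ((hint_hsq i).sub ((hint_h i).const_mul _)).add (integrable_const _)
    · have hφm : ∀ k : Fin n, Measurable (fun x : ℝ => Eh k - |g k x| * min (|g k x|) δ) :=
        fun k => measurable_const.sub (((hmeasg k).abs).mul (((hmeasg k).abs).min
          measurable_const))
      exact ((hindep.indepFun hij).comp (hφm i) (hφm j)).integrable_mul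
        ((int_a i)) ((int_a j))
  have E_a : ∀ i : Fin n, ∫ ω, (Eh i - h i ω) ∂μ = 0 := by
    intro i
    rw [integral_sub (integrable_const (Eh i)) (hint_h i), integral_const]
    simp [hEhdef]
  have E_aa : ∀ i j : Fin n, i ≠ j → ∫ ω, (Eh i - h i ω) * (Eh j - h j ω) ∂μ = 0 := by
    intro i j hij
    have hφm : ∀ k : Fin n, Measurable (fun x : ℝ => Eh k - |g k x| * min (|g k x|) δ) :=
      fun k => measurable_const.sub (((hmeasg k).abs).mul (((hmeasg k).abs).min
        measurable_const))
    have h2 := ((hindep.indepFun hij).comp (hφm i) (hφm j)).integral_mul_eq_mul_integral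
      (int_a i).aestronglyMeasurable (int_a j).aestronglyMeasurable
    have h3 : ∫ ω, (Eh i - h i ω) * (Eh j - h j ω) ∂μ
        = integral μ (((fun x : ℝ => Eh i - |g i x| * min (|g i x|) δ) ∘ (X i))
          * ((fun x : ℝ => Eh j - |g j x| * min (|g j x|) δ) ∘ (X j))) := rfl
    have h4 : integral μ ((fun x : ℝ => Eh i - |g i x| * min (|g i x|) δ) ∘ (X i)) = 0 :=
      E_a i
    rw [h3, h2, h4, zero_mul]
  have intD2 : Integrable (fun ω => (D ω)^2) μ := by
    have hexp : (fun ω => (D ω)^2) = fun ω => ∑ i, ∑ j, (Eh i - h i ω) * (Eh j - h j ω) := by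
      funext ω; rw [hDdef]; rw [pow_two, Finset.sum_mul_sum]
    rw [hexp]
    exact integrable_finset_sum _ (fun i _ => integrable_finset_sum _ (fun j _ => int_aa i j))
  have ED2 : ∫ ω, (D ω)^2 ∂μ ≤ δ*B3 + δ^2*B2 := by
    have hexp : (fun ω => (D ω)^2) = fun ω => ∑ i, ∑ j, (Eh i - h i ω) * (Eh j - h j ω) := by
      funext ω; rw [hDdef]; rw [pow_two, Finset.sum_mul_sum]
    rw [hexp, integral_finset_sum _ (fun i _ => integrable_finset_sum _
      (fun j _ => int_aa i j))]
    have hdiag : ∀ i : Fin n, ∫ ω, (∑ j, (Eh i - h i ω) * (Eh j - h j ω)) ∂μ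
        ≤ δ*(∫ ω, |g i (X i ω)|^3 * (if |g i (X i ω)| ≤ 1 then (1:ℝ) else 0) ∂μ)
          + δ^2*(∫ ω, (g i (X i ω))^2 * (if |g i (X i ω)| > 1 then (1:ℝ) else 0) ∂μ) := by
      intro i
      rw [integral_finset_sum _ (fun j _ => int_aa i j),
        Finset.sum_eq_single i (fun j _ hj => E_aa i j (Ne.symm hj)) (by simp)]
      have hsq : ∫ ω, (Eh i - h i ω) * (Eh i - h i ω) ∂μ = (∫ ω, (h i ω)^2 ∂μ) - (Eh i)^2 := by
        have hexp2 : (fun ω => (Eh i - h i ω) * (Eh i - h i ω))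
            = fun ω => (h i ω)^2 - (2*Eh i)*(h i ω) + (Eh i)^2 := by funext ω; ring
        have iS : Integrable (fun ω => (h i ω)^2 - (2*Eh i)*(h i ω)) μ := by
          exact (hint_hsq i).sub ((hint_h i).const_mul _)
        rw [hexp2, integral_add iS (integrable_const _),
          integral_sub (hint_hsq i) ((hint_h i).const_mul _),
          integral_const_mul, integral_const]
        have h1u : μ.real Set.univ = 1 := by simp
        have h2u : ∫ ω, h i ω ∂μ = Eh i := rfl
        rw [h1u, h2u, smul_eq_mul, one_mul]
        ring
      rw [hsq]
      have iJ1 : Integrable (fun ω => δ*(|g i (X i ω)|^3 *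
          (if |g i (X i ω)| ≤ 1 then (1:ℝ) else 0))) μ := (intT3 i).const_mul _
      have iJ2 : Integrable (fun ω => δ^2*((g i (X i ω))^2 *
          (if |g i (X i ω)| > 1 then (1:ℝ) else 0))) μ := (intT2 i).const_mul _
      have iJ : Integrable (fun ω => δ*(|g i (X i ω)|^3 *
          (if |g i (X i ω)| ≤ 1 then (1:ℝ) else 0)) + δ^2*((g i (X i ω))^2 *
          (if |g i (X i ω)| > 1 then (1:ℝ) else 0))) μ := by exact iJ1.add iJ2
      have hmono := integral_mono (hint_hsq i) iJ
        (fun ω => pw_hsq δ (g i (X i ω)) hδpos)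
      rw [integral_add iJ1 iJ2, integral_const_mul, integral_const_mul] at hmono
      nlinarith [sq_nonneg (Eh i)]
    calc ∑ i, ∫ ω, (∑ j, (Eh i - h i ω) * (Eh j - h j ω)) ∂μ
        ≤ ∑ i, (δ*(∫ ω, |g i (X i ω)|^3 * (if |g i (X i ω)| ≤ 1 then (1:ℝ) else 0) ∂μ)
          + δ^2*(∫ ω, (g i (X i ω))^2 * (if |g i (X i ω)| > 1 then (1:ℝ) else 0) ∂μ)) :=
          Finset.sum_le_sum (fun i _ => hdiag i)
      _ = δ*B3 + δ^2*B2 := by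
          rw [Finset.sum_add_distrib, ← Finset.mul_sum, ← Finset.mul_sum, hB2, hB3]
  have EDabs : ∫ ω, |D ω| ∂μ ≤ 17/24*β := by
    have hs : (0:ℝ) < 3/4*β := by linarith
    have iD2c : Integrable (fun ω => (D ω)^2 + (3/4*β)^2) μ := by
      exact intD2.add (integrable_const _)
    have hmono := integral_mono (intD.abs.const_mul (2*(3/4*β))) iD2c
      (fun ω => pw_amgm (3/4*β) (D ω))
    rw [integral_const_mul, integral_add intD2 (integrable_const _), integral_const] at hmono
    have h1 : μ.real Set.univ = 1 := by simp
    rw [h1, smul_eq_mul, one_mul] at hmono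
    have h2 : ∫ ω, (D ω)^2 ∂μ ≤ δ*β := by
      have : δ*B3 + δ^2*B2 ≤ δ*β := by
        nlinarith [hβ23, hδ1, hδpos.le, hB2nn, hB3nn,
          mul_nonneg (mul_nonneg hδpos.le hB2nn) (sub_nonneg.mpr hδ1)]
      linarith [ED2]
    have h3 : 2*(3/4*β) * ∫ ω, |D ω| ∂μ ≤ δ*β + (3/4*β)^2 := by linarith
    have h4 : δ*β + (3/4*β)^2 = 17/16*β^2 := by rw [hδdef]; ring
    rw [h4] at h3
    have hIb : (∫ ω, |D ω| ∂μ) * (3/2*β) ≤ (17/24*β) * (3/2*β) := by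
      calc (∫ ω, |D ω| ∂μ) * (3/2*β) = 2*(3/4*β) * ∫ ω, |D ω| ∂μ := by ring
        _ ≤ 17/16*β^2 := h3
        _ = (17/24*β) * (3/2*β) := by ring
    exact le_of_mul_le_mul_right hIb (by linarith : (0:ℝ) < 3/2*β)
  have ED : ∫ ω, D ω ∂μ = 0 := by
    rw [hDdef, integral_finset_sum _ (fun i _ => int_a i)]
    exact Finset.sum_eq_zero (fun i _ => E_a i)
  have EDpos : ∫ ω, max (D ω) 0 ∂μ ≤ 17/48*β := by
    have hpt : (fun ω => max (D ω) 0) = fun ω => (|D ω| + D ω)/2 :=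
      funext (fun ω => pw_pos_part (D ω))
    rw [hpt]
    have : ∫ ω, (|D ω| + D ω)/2 ∂μ = ((∫ ω, |D ω| ∂μ) + ∫ ω, D ω ∂μ)/2 := by
      rw [integral_div, integral_add intD.abs intD]
    rw [this, ED]
    linarith [EDabs]
  -- the event A and its indicator
  obtain ⟨A, hAdef⟩ : ∃ A : Set Ω, A = {ω | z - U ω < W ω ∧ W ω ≤ z + V ω} := ⟨_, rfl⟩
  have hAmeas : MeasurableSet A := by
    rw [hAdef, Set.setOf_and]
    exact (measurableSet_lt (measurable_const.sub hUm) hWm).inter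
      (measurableSet_le hWm (measurable_const.add hVm))
  set ind : Ω → ℝ := fun ω => if z - U ω < W ω ∧ W ω ≤ z + V ω then (1:ℝ) else 0
    with hinddef
  have hcondm : MeasurableSet {ω | z - U ω < W ω ∧ W ω ≤ z + V ω} := hAdef ▸ hAmeas
  have hindm : Measurable ind := Measurable.ite hcondm measurable_const measurable_const
  have hind01 : ∀ ω, 0 ≤ ind ω ∧ ind ω ≤ 1 := by
    intro ω; simp only [hinddef]; split_ifs <;> norm_num
  have hPA : ∫ ω, ind ω ∂μ = (μ A).toReal := by
    have hie : ind = A.indicator (fun _ => (1:ℝ)) := by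
      funext ω
      simp only [hinddef, Set.indicator_apply, hAdef, Set.mem_setOf_eq]
    rw [hie, integral_indicator_const (1:ℝ) hAmeas, smul_eq_mul, mul_one]
    rfl
  -- the Stein test functions
  have hFm : Measurable (fun p : ℝ × ℝ × ℝ => steinF z δ p.1 p.2.1 p.2.2) := by
    unfold steinF clampCS
    have m1 : Measurable (fun p : ℝ × ℝ × ℝ => p.1) := measurable_fst
    have m2 : Measurable (fun p : ℝ × ℝ × ℝ => p.2.1) := measurable_fst.comp measurable_snd
    have m3 : Measurable (fun p : ℝ × ℝ × ℝ => p.2.2) := measurable_snd.comp measurable_snd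
    exact (((m3.sub measurable_const).max ((m1.add measurable_const).neg)).min
      (m2.add measurable_const)).sub ((m2.sub m1).div_const 2)
  set fW : Ω → ℝ := fun ω => steinF z δ (U ω) (V ω) (W ω) with hfWdef
  have hfWm : Measurable fW := hFm.comp (hUm.prodMk (hVm.prodMk hWm))
  have hfWb : ∀ ω, |fW ω| ≤ M + δ := by
    intro ω
    have hb := steinF_abs_le z δ (U ω) (V ω) (W ω) (hU0 ω) (hV0 ω) hδpos.le
    have h2 := hUM ω; have h3 := hVM ω
    simp only [hfWdef]; linarith
  set fWi : Fin n → Ω → ℝ := fun i ω => steinF z δ (U ω) (V ω) (W ω - ξ i ω) with hfWidef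
  have hfWim : ∀ i, Measurable (fWi i) :=
    fun i => hFm.comp (hUm.prodMk (hVm.prodMk (hWm.sub (hξm i))))
  have hfWib : ∀ i ω, |fWi i ω| ≤ M + δ := by
    intro i ω
    have hb := steinF_abs_le z δ (U ω) (V ω) (W ω - ξ i ω) (hU0 ω) (hV0 ω) hδpos.le
    have h2 := hUM ω; have h3 := hVM ω
    simp only [hfWidef]; linarith
  set fWii : Fin n → Ω → ℝ := fun i ω => steinF z δ (Ui i ω) (Vi i ω) (W ω - ξ i ω)
    with hfWiidef
  have hfWiim : ∀ i, Measurable (fWii i) :=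
    fun i => hFm.comp ((hUim i).prodMk ((hVim i).prodMk (hWm.sub (hξm i))))
  have hfWiib : ∀ i ω, |fWii i ω| ≤ M + δ := by
    intro i ω
    have hb := steinF_abs_le z δ (Ui i ω) (Vi i ω) (W ω - ξ i ω) (hUi0 i ω) (hVi0 i ω) hδpos.le
    have h2 := hUiM i ω; have h3 := hViM i ω
    simp only [hfWiidef]; linarith
  -- integrability of products
  have int_fWξ : ∀ i, Integrable (fun ω => fW ω * ξ i ω) μ := fun i =>
    Integrable.bdd_mul (hint i) hfWm.aestronglyMeasurable
      (c := M+δ) (Filter.Eventually.of_forall fun ω => by rw [Real.norm_eq_abs]; exact hfWb ω)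
  have int_fWiξ : ∀ i, Integrable (fun ω => fWi i ω * ξ i ω) μ := fun i =>
    Integrable.bdd_mul (hint i) (hfWim i).aestronglyMeasurable
      (c := M+δ) (Filter.Eventually.of_forall fun ω => by rw [Real.norm_eq_abs]; exact hfWib i ω)
  have int_fWiiξ : ∀ i, Integrable (fun ω => fWii i ω * ξ i ω) μ := fun i =>
    Integrable.bdd_mul (hint i) (hfWiim i).aestronglyMeasurable
      (c := M+δ) (Filter.Eventually.of_forall fun ω => by rw [Real.norm_eq_abs]; exact hfWiib i ω)
  have int_fWii : ∀ i, Integrable (fWii i) μ := by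
    intro i
    refine Integrable.mono (integrable_const (M+δ)) (hfWiim i).aestronglyMeasurable ?_
    refine Filter.Eventually.of_forall (fun ω => ?_)
    rw [Real.norm_eq_abs, Real.norm_eq_abs]
    exact le_trans (hfWiib i ω) (le_abs_self _)
  -- zero mean of the decoupled term
  have E_fWiiξ : ∀ i, ∫ ω, fWii i ω * ξ i ω ∂μ = 0 := by
    intro i
    have hI : IndepFun (fWii i) (fun ω => g i (X i ω)) μ := by
      have hcomp := ((hindUV i).symm.comp hFm (hmeasg i))
      exact hcomp
    have h2 := hI.integral_mul_eq_mul_integral (int_fWii i).aestronglyMeasurable (hint i).aestronglyMeasurable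
    have h3 : ∫ ω, fWii i ω * ξ i ω ∂μ
        = integral μ ((fWii i) * (fun ω => g i (X i ω))) := rfl
    rw [h3, h2, hmean i, mul_zero]
  -- Step A : indicator gain
  have int_indh : ∀ i, Integrable (fun ω => ind ω * h i ω) μ := fun i =>
    Integrable.bdd_mul (hint_h i) hindm.aestronglyMeasurable
      (c := 1) (Filter.Eventually.of_forall fun ω => by rw [Real.norm_eq_abs, abs_of_nonneg (hind01 ω).1]; exact (hind01 ω).2)
  have step_a : ∀ i, ∫ ω, ind ω * h i ω ∂μ
      ≤ (∫ ω, fW ω * ξ i ω ∂μ) - ∫ ω, fWi i ω * ξ i ω ∂μ := by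
    intro i
    have hmono : ∫ ω, ind ω * h i ω ∂μ ≤ ∫ ω, (fW ω * ξ i ω - fWi i ω * ξ i ω) ∂μ := by
      refine integral_mono (int_indh i) (by exact (int_fWξ i).sub (int_fWiξ i)) ?_
      intro ω
      have hg := steinF_gain_if z δ (U ω) (V ω) hδpos (W ω) (ξ i ω)
      simp only [hinddef, hhdef, hfWdef, hfWidef]
      nlinarith [hg]
    rw [integral_sub (int_fWξ i) (int_fWiξ i)] at hmono
    exact hmono
  -- Step B : Lipschitz substitution
  set Lip : Fin n → ℝ :=
    fun i => ∫ ω, (|U ω - Ui i ω| + |V ω - Vi i ω|) * |ξ i ω| ∂μ with hLipdef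
  have int_lip : ∀ i, Integrable
      (fun ω => (|U ω - Ui i ω| + |V ω - Vi i ω|) * |ξ i ω|) μ := by
    intro i
    refine Integrable.bdd_mul (hint i).abs
      ((((hUm.sub (hUim i)).abs).add ((hVm.sub (hVim i)).abs)).aestronglyMeasurable)
      (c := 2*M) (Filter.Eventually.of_forall fun ω => ?_)
    rw [Real.norm_eq_abs]
    have b1 : |U ω - Ui i ω| ≤ M := abs_le.mpr
      ⟨by linarith [hU0 ω, hUiM i ω], by linarith [hUM ω, hUi0 i ω]⟩
    have b2 : |V ω - Vi i ω| ≤ M := abs_le.mpr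
      ⟨by linarith [hV0 ω, hViM i ω], by linarith [hVM ω, hVi0 i ω]⟩
    rw [abs_of_nonneg (by positivity : (0:ℝ) ≤ |U ω - Ui i ω| + |V ω - Vi i ω|)]
    linarith
  have step_b : ∀ i, -(1/2 * Lip i) ≤ ∫ ω, fWi i ω * ξ i ω ∂μ := by
    intro i
    have key : -∫ ω, 1/2 * ((|U ω - Ui i ω| + |V ω - Vi i ω|) * |ξ i ω|) ∂μ
        ≤ ∫ ω, (fWi i ω * ξ i ω - fWii i ω * ξ i ω) ∂μ := by
      rw [← integral_neg]
      refine integral_mono (by exact ((int_lip i).const_mul (1/2)).neg)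
        (by exact (int_fWiξ i).sub (int_fWiiξ i)) ?_
      intro ω
      have hlip := steinF_lip z δ (U ω) (V ω) (Ui i ω) (Vi i ω) (W ω - ξ i ω)
      have h5 : -|( fWi i ω - fWii i ω) * ξ i ω| ≤ (fWi i ω - fWii i ω) * ξ i ω :=
        neg_abs_le _
      have h6 : |(fWi i ω - fWii i ω) * ξ i ω| = |fWi i ω - fWii i ω| * |ξ i ω| := abs_mul _ _
      have h7 : |fWi i ω - fWii i ω| * |ξ i ω|
          ≤ (|U ω - Ui i ω| + |V ω - Vi i ω|)/2 * |ξ i ω| := by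
        refine mul_le_mul_of_nonneg_right ?_ (abs_nonneg _)
        simp only [hfWidef, hfWiidef]
        exact hlip
      nlinarith [h5, h6, h7]
    rw [integral_sub (int_fWiξ i) (int_fWiiξ i), E_fWiiξ i, sub_zero,
      integral_const_mul] at key
    have hL : ∫ ω, (|U ω - Ui i ω| + |V ω - Vi i ω|) * |ξ i ω| ∂μ = Lip i := rfl
    rw [hL] at key
    linarith
  -- summation of the main Stein term
  have int_UVW : Integrable (fun ω => (U ω + V ω) * |W ω|) μ := by
    refine Integrable.bdd_mul hWint.abs ((hUm.add hVm).aestronglyMeasurable) (c := 2*M) (Filter.Eventually.of_forall fun ω => ?_)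
    rw [Real.norm_eq_abs, abs_of_nonneg (by linarith [hU0 ω, hV0 ω] : (0:ℝ) ≤ U ω + V ω)]
    linarith [hUM ω, hVM ω]
  have sumS : ∑ i, ∫ ω, fW ω * ξ i ω ∂μ
      ≤ 1/2 * (∫ ω, (U ω + V ω) * |W ω| ∂μ) + δ := by
    have h1 : ∑ i, ∫ ω, fW ω * ξ i ω ∂μ = ∫ ω, fW ω * W ω ∂μ := by
      rw [← integral_finset_sum _ (fun i _ => int_fWξ i)]
      congr 1; funext ω
      rw [hW ω, Finset.mul_sum]
    have int_fWW : Integrable (fun ω => fW ω * W ω) μ :=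
      Integrable.bdd_mul hWint hfWm.aestronglyMeasurable
        (c := M+δ) (Filter.Eventually.of_forall fun ω => by rw [Real.norm_eq_abs]; exact hfWb ω)
    have int_RHS : Integrable (fun ω => 1/2 * ((U ω + V ω) * |W ω|) + δ * |W ω|) μ := by
      exact (int_UVW.const_mul _).add (hWint.abs.const_mul _)
    have h2 : ∫ ω, fW ω * W ω ∂μ
        ≤ ∫ ω, (1/2 * ((U ω + V ω) * |W ω|) + δ * |W ω|) ∂μ := by
      refine integral_mono int_fWW int_RHS ?_
      intro ω
      have hb := steinF_abs_le z δ (U ω) (V ω) (W ω) (hU0 ω) (hV0 ω) hδpos.le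
      have c1 : fW ω * W ω ≤ |fW ω| * |W ω| := by
        calc fW ω * W ω ≤ |fW ω * W ω| := le_abs_self _
          _ = |fW ω| * |W ω| := abs_mul _ _
      have c2 : |fW ω| * |W ω| ≤ ((U ω + V ω + 2*δ)/2) * |W ω| := by
        refine mul_le_mul_of_nonneg_right ?_ (abs_nonneg _)
        simp only [hfWdef]; exact hb
      nlinarith [c1, c2]
    have h3 : ∫ ω, (1/2 * ((U ω + V ω) * |W ω|) + δ * |W ω|) ∂μ
        = 1/2 * (∫ ω, (U ω + V ω) * |W ω| ∂μ) + δ * ∫ ω, |W ω| ∂μ := by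
      rw [integral_add (by exact int_UVW.const_mul _) (by exact hWint.abs.const_mul _),
        integral_const_mul, integral_const_mul]
    have h4 : δ * ∫ ω, |W ω| ∂μ ≤ δ := by
      have := mul_le_mul_of_nonneg_left hEW1 hδpos.le
      linarith
    linarith [h1, h2, h3.le, h3.ge]
  -- Step 9: from indicator times EH to the gain terms
  have hDm : Measurable D := by
    rw [hDdef]
    exact Finset.measurable_sum _ (fun i _ => measurable_const.sub (hhm i))
  have hmaxD_int : Integrable (fun ω => max (D ω) 0) μ := by
    refine Integrable.mono intD ((hDm.max measurable_const).aestronglyMeasurable) ?_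
    refine Filter.Eventually.of_forall (fun ω => ?_)
    rw [Real.norm_eq_abs, Real.norm_eq_abs]
    rcases le_total (D ω) 0 with hc | hc
    · rw [max_eq_right hc]; simp [abs_nonneg]
    · rw [max_eq_left hc]
  have step9 : (μ A).toReal * EH ≤ (∫ ω, ind ω * (∑ i, h i ω) ∂μ)
      + ∫ ω, max (D ω) 0 ∂μ := by
    have hindH_int : Integrable (fun ω => ind ω * (∑ i, h i ω)) μ := by
      refine Integrable.bdd_mul (by exact integrable_finset_sum _ (fun i _ => hint_h i))
        hindm.aestronglyMeasurable (c := 1) (Filter.Eventually.of_forall fun ω => ?_)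
      rw [Real.norm_eq_abs, abs_of_nonneg (hind01 ω).1]
      exact (hind01 ω).2
    have hL : ∫ ω, ind ω * EH ∂μ = (μ A).toReal * EH := by
      rw [integral_mul_const, hPA]
    have hindEH_int : Integrable (fun ω => ind ω * EH) μ := by
      refine Integrable.bdd_mul (integrable_const EH) hindm.aestronglyMeasurable
        (c := 1) (Filter.Eventually.of_forall fun ω => ?_)
      rw [Real.norm_eq_abs, abs_of_nonneg (hind01 ω).1]
      exact (hind01 ω).2
    have hiRHS : Integrable (fun ω => ind ω * (∑ i, h i ω) + max (D ω) 0) μ := by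
      exact hindH_int.add hmaxD_int
    have hmono : ∫ ω, ind ω * EH ∂μ
        ≤ ∫ ω, (ind ω * (∑ i, h i ω) + max (D ω) 0) ∂μ := by
      refine integral_mono hindEH_int hiRHS ?_
      intro ω
      have hDval : D ω = EH - ∑ i, h i ω := by
        simp only [hDdef]
        rw [Finset.sum_sub_distrib, hEHdef]
      have hm1 := le_max_left (D ω) 0
      have hm2 := le_max_right (D ω) 0
      simp only [hinddef]
      split_ifs with hc
      · linarith
      · have hs0 : (0:ℝ) ≤ ∑ i, h i ω := Finset.sum_nonneg (fun i _ => hh0 i ω)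
        linarith
    rw [integral_add hindH_int hmaxD_int] at hmono
    rw [← hL]
    exact hmono
  have step3sum : ∫ ω, ind ω * (∑ i, h i ω) ∂μ = ∑ i, ∫ ω, ind ω * h i ω ∂μ := by
    rw [← integral_finset_sum _ (fun i _ => int_indh i)]
    congr 1; funext ω
    rw [Finset.mul_sum]
  have per : ∀ i, ∫ ω, ind ω * h i ω ∂μ ≤ (∫ ω, fW ω * ξ i ω ∂μ) + 1/2 * Lip i := by
    intro i
    have h1 := step_a i
    have h2 := step_b i
    linarith
  have hsum2 : ∑ i, ∫ ω, ind ω * h i ω ∂μ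
      ≤ (∑ i, ∫ ω, fW ω * ξ i ω ∂μ) + 1/2 * ∑ i, Lip i := by
    calc ∑ i, ∫ ω, ind ω * h i ω ∂μ
        ≤ ∑ i, ((∫ ω, fW ω * ξ i ω ∂μ) + 1/2 * Lip i) :=
          Finset.sum_le_sum (fun i _ => per i)
      _ = (∑ i, ∫ ω, fW ω * ξ i ω ∂μ) + 1/2 * ∑ i, Lip i := by
          rw [Finset.sum_add_distrib, Finset.mul_sum]
  have hPhalf : (μ A).toReal * (1/2) ≤ (μ A).toReal * EH :=
    mul_le_mul_of_nonneg_left hEHhalf ENNReal.toReal_nonneg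
  have final : (μ A).toReal ≤ 2*β + (∫ ω, (U ω + V ω) * |W ω| ∂μ) + ∑ i, Lip i := by
    have hβδ : δ = β/2 := hδdef
    have hLipnn : (0:ℝ) ≤ ∑ i, Lip i := by
      refine Finset.sum_nonneg (fun i _ => ?_)
      have hnn : (0:ℝ) ≤ ∫ ω, (|U ω - Ui i ω| + |V ω - Vi i ω|) * |ξ i ω| ∂μ :=
        integral_nonneg (fun ω => mul_nonneg
          (add_nonneg (abs_nonneg _) (abs_nonneg _)) (abs_nonneg _))
      exact hnn
    nlinarith [step9, step3sum.le, step3sum.ge, hsum2, sumS, EDpos, hPhalf, hβpos, hLipnn]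
  rw [← hAdef]
  have hLipEq : ∀ i, Lip i = ∫ ω, (|U ω - Ui i ω| + |V ω - Vi i ω|) * |g i (X i ω)| ∂μ :=
    fun i => rfl
  calc (μ A).toReal ≤ 2*β + (∫ ω, (U ω + V ω) * |W ω| ∂μ) + ∑ i, Lip i := final
    _ = 2*β + (∫ ω, (U ω + V ω) * |W ω| ∂μ)
        + ∑ i, ∫ ω, (|U ω - Ui i ω| + |V ω - Vi i ω|) * |g i (X i ω)| ∂μ := by
      rw [Finset.sum_congr rfl (fun i _ => hLipEq i)]

set_option maxHeartbeats 2000000 in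
theorem concentration_inequality_beta {Ω : Type*} [MeasurableSpace Ω] (μ : Measure Ω)
    [IsProbabilityMeasure μ] (n : ℕ) (X : Fin n → Ω → ℝ) (g : Fin n → ℝ → ℝ)
    (hmeasX : ∀ i, Measurable (X i)) (hmeasg : ∀ i, Measurable (g i))
    (hindep : iIndepFun X μ)
    (hint : ∀ i, Integrable (fun ω => g i (X i ω)) μ)
    (hint2 : ∀ i, Integrable (fun ω => (g i (X i ω)) ^ 2) μ)
    (hint3 : ∀ i, Integrable (fun ω => |g i (X i ω)| ^ 3) μ)
    (hmean : ∀ i, ∫ ω, g i (X i ω) ∂μ = 0)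
    (hvar : ∑ i, ∫ ω, (g i (X i ω)) ^ 2 ∂μ = 1)
    (W Δ T : Ω → ℝ) (hW : ∀ ω, W ω = ∑ i, g i (X i ω)) (hΔ : Measurable Δ)
    (hT : ∀ ω, T ω = W ω + Δ ω)
    (Δi : Fin n → Ω → ℝ) (hmeasΔi : ∀ i, Measurable (Δi i))
    (hindepΔi : ∀ i, IndepFun (X i) (fun ω => (Δi i ω, W ω - g i (X i ω))) μ)
    (hintWΔ : Integrable (fun ω => W ω * Δ ω) μ)
    (hintgΔ : ∀ i, Integrable (fun ω => g i (X i ω) * (Δ ω - Δi i ω)) μ)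
    (β : ℝ)
    (hβ : β = (∑ i, ∫ ω, (g i (X i ω)) ^ 2 *
          (if |g i (X i ω)| > 1 then (1 : ℝ) else 0) ∂μ) +
        ∑ i, ∫ ω, |g i (X i ω)| ^ 3 *
          (if |g i (X i ω)| ≤ 1 then (1 : ℝ) else 0) ∂μ) :
    ∀ z : ℝ, |(μ {ω | T ω ≤ z}).toReal - (μ {ω | W ω ≤ z}).toReal| ≤
      2 * β + ∫ ω, |W ω * Δ ω| ∂μ + ∑ i, ∫ ω, |g i (X i ω) * (Δ ω - Δi i ω)| ∂μ := by
  intro z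
  have hWm : Measurable W := by
    have : W = fun ω => ∑ i, g i (X i ω) := funext hW
    rw [this]
    exact Finset.measurable_sum _ (fun i _ => (hmeasg i).comp (hmeasX i))
  -- nonnegativity facts
  have hWΔnn : (0:ℝ) ≤ ∫ ω, |W ω * Δ ω| ∂μ := integral_nonneg (fun ω => abs_nonneg _)
  have hSumnn : (0:ℝ) ≤ ∑ i, ∫ ω, |g i (X i ω) * (Δ ω - Δi i ω)| ∂μ :=
    Finset.sum_nonneg (fun i _ => integral_nonneg (fun ω => abs_nonneg _))
  have hβnn : 0 ≤ β := by
    rw [hβ]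
    have h1 : (0:ℝ) ≤ ∑ i, ∫ ω, (g i (X i ω)) ^ 2 *
        (if |g i (X i ω)| > 1 then (1 : ℝ) else 0) ∂μ := by
      refine Finset.sum_nonneg (fun i _ => integral_nonneg (fun ω => ?_))
      refine mul_nonneg (sq_nonneg _) ?_
      split_ifs <;> norm_num
    have h2 : (0:ℝ) ≤ ∑ i, ∫ ω, |g i (X i ω)| ^ 3 *
        (if |g i (X i ω)| ≤ 1 then (1 : ℝ) else 0) ∂μ := by
      refine Finset.sum_nonneg (fun i _ => integral_nonneg (fun ω => ?_))
      refine mul_nonneg (by positivity) ?_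
      split_ifs <;> norm_num
    linarith
  have hP1 : ∀ s : Set Ω, (μ s).toReal ≤ 1 := by
    intro s
    have h1 : μ s ≤ 1 := prob_le_one
    have := ENNReal.toReal_mono ENNReal.one_ne_top h1
    simpa using this
  rcases lt_or_ge (1/2 : ℝ) β with hgt | hle
  · -- trivial case
    have h1 := hP1 {ω | T ω ≤ z}
    have h2 := hP1 {ω | W ω ≤ z}
    have h3 : (0:ℝ) ≤ (μ {ω | T ω ≤ z}).toReal := ENNReal.toReal_nonneg
    have h4 : (0:ℝ) ≤ (μ {ω | W ω ≤ z}).toReal := ENNReal.toReal_nonneg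
    rw [abs_le]
    constructor <;> linarith
  -- non-trivial case : first, β > 0
  have hβpos : 0 < β := by
    rcases eq_or_lt_of_le hβnn with heq | hlt
    · exfalso
      -- β = 0 forces all variables to vanish, contradicting hvar
      have intT3 : ∀ i, Integrable
          (fun ω => |g i (X i ω)|^3 * (if |g i (X i ω)| ≤ 1 then (1:ℝ) else 0)) μ := by
        intro i
        refine Integrable.mono (hint3 i) ?_ ?_
        · exact ((((hmeasg i).comp (hmeasX i)).abs.pow_const 3).mul
            (Measurable.ite (measurableSet_le (((hmeasg i).comp (hmeasX i)).abs)
              measurable_const) measurable_const measurable_const)).aestronglyMeasurable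
        · refine Filter.Eventually.of_forall (fun ω => ?_)
          rw [Real.norm_eq_abs, Real.norm_eq_abs]
          split_ifs with hc <;>
            simp [abs_mul, abs_of_nonneg (pow_nonneg (abs_nonneg (g i (X i ω))) 3)] <;>
            positivity
      have intT2 : ∀ i, Integrable
          (fun ω => (g i (X i ω))^2 * (if |g i (X i ω)| > 1 then (1:ℝ) else 0)) μ := by
        intro i
        refine Integrable.mono (hint2 i) ?_ ?_
        · exact ((((hmeasg i).comp (hmeasX i)).pow_const 2).mul
            (Measurable.ite (measurableSet_lt measurable_const
              (((hmeasg i).comp (hmeasX i)).abs)) measurable_const measurable_const))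
            |>.aestronglyMeasurable
        · refine Filter.Eventually.of_forall (fun ω => ?_)
          rw [Real.norm_eq_abs, Real.norm_eq_abs]
          split_ifs with hc <;>
            simp [abs_mul, abs_of_nonneg (sq_nonneg (g i (X i ω)))] <;> positivity
      have hnn2 : ∀ i : Fin n, 0 ≤ ∫ ω, (g i (X i ω)) ^ 2 *
          (if |g i (X i ω)| > 1 then (1 : ℝ) else 0) ∂μ := by
        intro i
        refine integral_nonneg (fun ω => mul_nonneg (sq_nonneg _) ?_)
        split_ifs <;> norm_num
      have hnn3 : ∀ i : Fin n, 0 ≤ ∫ ω, |g i (X i ω)| ^ 3 *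
          (if |g i (X i ω)| ≤ 1 then (1 : ℝ) else 0) ∂μ := by
        intro i
        refine integral_nonneg (fun ω => mul_nonneg (by positivity) ?_)
        split_ifs <;> norm_num
      have hs2 : ∑ i, ∫ ω, (g i (X i ω)) ^ 2 *
          (if |g i (X i ω)| > 1 then (1 : ℝ) else 0) ∂μ = 0 := by
        have hs3' : (0:ℝ) ≤ ∑ i, ∫ ω, |g i (X i ω)| ^ 3 *
            (if |g i (X i ω)| ≤ 1 then (1 : ℝ) else 0) ∂μ :=
          Finset.sum_nonneg (fun i _ => hnn3 i)
        have hs2' : (0:ℝ) ≤ ∑ i, ∫ ω, (g i (X i ω)) ^ 2 *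
            (if |g i (X i ω)| > 1 then (1 : ℝ) else 0) ∂μ :=
          Finset.sum_nonneg (fun i _ => hnn2 i)
        linarith [hβ ▸ heq.symm]
      have hs3 : ∑ i, ∫ ω, |g i (X i ω)| ^ 3 *
          (if |g i (X i ω)| ≤ 1 then (1 : ℝ) else 0) ∂μ = 0 := by
        have hs2' : (0:ℝ) ≤ ∑ i, ∫ ω, (g i (X i ω)) ^ 2 *
            (if |g i (X i ω)| > 1 then (1 : ℝ) else 0) ∂μ :=
          Finset.sum_nonneg (fun i _ => hnn2 i)
        have hs3' : (0:ℝ) ≤ ∑ i, ∫ ω, |g i (X i ω)| ^ 3 *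
            (if |g i (X i ω)| ≤ 1 then (1 : ℝ) else 0) ∂μ :=
          Finset.sum_nonneg (fun i _ => hnn3 i)
        linarith [hβ ▸ heq.symm]
      have hterm2 : ∀ i ∈ Finset.univ, ∫ ω, (g i (X i ω)) ^ 2 *
          (if |g i (X i ω)| > 1 then (1 : ℝ) else 0) ∂μ = 0 :=
        (Finset.sum_eq_zero_iff_of_nonneg (fun i _ => hnn2 i)).mp hs2
      have hterm3 : ∀ i ∈ Finset.univ, ∫ ω, |g i (X i ω)| ^ 3 *
          (if |g i (X i ω)| ≤ 1 then (1 : ℝ) else 0) ∂μ = 0 :=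
        (Finset.sum_eq_zero_iff_of_nonneg (fun i _ => hnn3 i)).mp hs3
      have hzero : ∀ i : Fin n, ∫ ω, (g i (X i ω))^2 ∂μ = 0 := by
        intro i
        have hae2 : (fun ω => (g i (X i ω)) ^ 2 *
            (if |g i (X i ω)| > 1 then (1 : ℝ) else 0)) =ᵐ[μ] 0 := by
          rw [← integral_eq_zero_iff_of_nonneg (fun ω => mul_nonneg (sq_nonneg _)
            (by split_ifs <;> norm_num)) (intT2 i)]
          exact hterm2 i (Finset.mem_univ i)
        have hae3 : (fun ω => |g i (X i ω)| ^ 3 *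
            (if |g i (X i ω)| ≤ 1 then (1 : ℝ) else 0)) =ᵐ[μ] 0 := by
          rw [← integral_eq_zero_iff_of_nonneg (fun ω => mul_nonneg (by positivity)
            (by split_ifs <;> norm_num)) (intT3 i)]
          exact hterm3 i (Finset.mem_univ i)
        have hae : (fun ω => (g i (X i ω))^2) =ᵐ[μ] 0 := by
          filter_upwards [hae2, hae3] with ω h2ω h3ω
          rcases le_or_gt (|g i (X i ω)|) 1 with hc | hc
          · simp only [if_pos hc, mul_one, Pi.zero_apply] at h3ω
            have : |g i (X i ω)| = 0 := by
              have := pow_eq_zero_iff (n := 3) (by norm_num) |>.mp h3ω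
              simpa using this
            simp only [Pi.zero_apply]
            rw [← sq_abs, this]
            norm_num
          · simp only [if_pos hc, mul_one, Pi.zero_apply] at h2ω
            simpa using h2ω
        rw [integral_congr_ae hae]
        simp
      rw [Finset.sum_congr rfl (fun i _ => hzero i)] at hvar
      simp at hvar
    · exact hlt
  -- main case
  have hWint : Integrable W μ := by
    have : W = fun ω => ∑ i, g i (X i ω) := funext hW
    rw [this]
    exact integrable_finset_sum _ (fun i _ => hint i)
  set C : ℝ := 2 * β + ∫ ω, |W ω * Δ ω| ∂μ
      + ∑ i, ∫ ω, |g i (X i ω) * (Δ ω - Δi i ω)| ∂μ with hCdef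
  have hC0 : 0 ≤ C := by rw [hCdef]; linarith
  have side1 : (μ {ω | T ω ≤ z}).toReal - (μ {ω | W ω ≤ z}).toReal ≤ C := by
    have hBle : ∀ m : ℕ, (μ {ω | z < W ω ∧
        W ω ≤ z + min (max (-Δ ω) 0) (m:ℝ)}).toReal ≤ C := by
      intro m
      have hVmm : Measurable (fun ω => min (max (-Δ ω) 0) (m:ℝ)) :=
        (hΔ.neg.max measurable_const).min measurable_const
      have hindUV : ∀ i, IndepFun (X i) (fun ω => ((fun (_ : Ω) => (0:ℝ)) ω,
          min (max (-Δi i ω) 0) (m:ℝ), W ω - g i (X i ω))) μ := by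
        intro i
        have hψ : Measurable (fun p : ℝ × ℝ =>
            ((0:ℝ), min (max (-p.1) 0) (m:ℝ), p.2)) :=
          measurable_const.prodMk
            (((measurable_fst.neg.max measurable_const).min measurable_const).prodMk
              measurable_snd)
        exact (hindepΔi i).comp measurable_id hψ
      have hcore := concentration_core μ n X g hmeasX hmeasg hindep hint hint2 hint3
        hmean hvar W hW β hβ hβpos hle z (m:ℝ) (Nat.cast_nonneg m)
        (fun _ => 0) (fun ω => min (max (-Δ ω) 0) (m:ℝ))
        measurable_const hVmm
        (fun ω => le_refl 0)
        (fun ω => le_min (le_max_right _ _) (Nat.cast_nonneg m))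
        (fun ω => Nat.cast_nonneg m) (fun ω => min_le_right _ _)
        (fun i _ => 0) (fun i ω => min (max (-Δi i ω) 0) (m:ℝ))
        (fun i => measurable_const)
        (fun i => ((hmeasΔi i).neg.max measurable_const).min measurable_const)
        (fun i ω => le_refl 0)
        (fun i ω => le_min (le_max_right _ _) (Nat.cast_nonneg m))
        (fun i ω => Nat.cast_nonneg m) (fun i ω => min_le_right _ _)
        hindUV
      simp only [sub_zero, zero_add, add_zero, sub_self, abs_zero] at hcore
      have hcmp1 : ∫ ω, min (max (-Δ ω) 0) (m:ℝ) * |W ω| ∂μ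
          ≤ ∫ ω, |W ω * Δ ω| ∂μ := by
        have hpt : ∀ ω, min (max (-Δ ω) 0) (m:ℝ) * |W ω| ≤ |W ω * Δ ω| := by
          intro ω
          have h1 : min (max (-Δ ω) 0) (m:ℝ) ≤ |Δ ω| :=
            le_trans (min_le_left _ _) (max_le (neg_le_abs _) (abs_nonneg _))
          have h2 : min (max (-Δ ω) 0) (m:ℝ) * |W ω| ≤ |Δ ω| * |W ω| :=
            mul_le_mul_of_nonneg_right h1 (abs_nonneg _)
          rw [abs_mul]
          linarith
        refine integral_mono ?_ hintWΔ.abs hpt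
        refine Integrable.bdd_mul hWint.abs hVmm.aestronglyMeasurable (c := (m:ℝ)) (Filter.Eventually.of_forall fun ω => ?_)
        rw [Real.norm_eq_abs, abs_of_nonneg (le_min (le_max_right _ _) (Nat.cast_nonneg m))]
        exact min_le_right _ _
      have hcmp2 : ∀ i ∈ Finset.univ,
          ∫ ω, |min (max (-Δ ω) 0) (m:ℝ) - min (max (-Δi i ω) 0) (m:ℝ)| * |g i (X i ω)| ∂μ
          ≤ ∫ ω, |g i (X i ω) * (Δ ω - Δi i ω)| ∂μ := by
        intro i _
        have hpt : ∀ ω, |min (max (-Δ ω) 0) (m:ℝ) - min (max (-Δi i ω) 0) (m:ℝ)|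
            * |g i (X i ω)| ≤ |g i (X i ω) * (Δ ω - Δi i ω)| := by
          intro ω
          have h1 : |min (max (-Δ ω) 0) (m:ℝ) - min (max (-Δi i ω) 0) (m:ℝ)|
              ≤ |Δ ω - Δi i ω| := by
            have := trunc_lip (m:ℝ) (-Δ ω) (-Δi i ω)
            have heq : |(-Δ ω) - (-Δi i ω)| = |Δ ω - Δi i ω| := by
              rw [show (-Δ ω) - (-Δi i ω) = -(Δ ω - Δi i ω) by ring, abs_neg]
            rw [heq] at this
            exact this
          have h2 := mul_le_mul_of_nonneg_right h1 (abs_nonneg (g i (X i ω)))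
          rw [abs_mul]
          linarith
        have hmL : Measurable (fun ω =>
            |min (max (-Δ ω) 0) (m:ℝ) - min (max (-Δi i ω) 0) (m:ℝ)| * |g i (X i ω)|) :=
          ((((hΔ.neg.max measurable_const).min measurable_const).sub
            (((hmeasΔi i).neg.max measurable_const).min measurable_const)).abs).mul
            (((hmeasg i).comp (hmeasX i)).abs)
        have hintL : Integrable (fun ω =>
            |min (max (-Δ ω) 0) (m:ℝ) - min (max (-Δi i ω) 0) (m:ℝ)| * |g i (X i ω)|) μ := by
          refine Integrable.mono (hintgΔ i).abs hmL.aestronglyMeasurable ?_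
          refine Filter.Eventually.of_forall (fun ω => ?_)
          rw [Real.norm_eq_abs, Real.norm_eq_abs, abs_abs,
            abs_of_nonneg (mul_nonneg (abs_nonneg _) (abs_nonneg _))]
          exact hpt ω
        exact integral_mono hintL (hintgΔ i).abs hpt
      have := Finset.sum_le_sum hcmp2
      rw [hCdef]
      linarith [hcore, hcmp1, this]
    have hsub : {ω | T ω ≤ z} \ {ω | W ω ≤ z} ⊆
        ⋃ m : ℕ, {ω | z < W ω ∧ W ω ≤ z + min (max (-Δ ω) 0) (m:ℝ)} := by
      rintro ω ⟨hTz, hWz⟩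
      simp only [Set.mem_setOf_eq, not_le] at hTz hWz
      refine Set.mem_iUnion.mpr ⟨⌈-Δ ω⌉₊, ?_⟩
      simp only [Set.mem_setOf_eq]
      have hTW : W ω + Δ ω ≤ z := by rw [← hT ω]; exact hTz
      refine ⟨hWz, ?_⟩
      have h1 : W ω - z ≤ -Δ ω := by linarith
      have h2 : W ω - z ≤ max (-Δ ω) 0 := le_trans h1 (le_max_left _ _)
      have h3 : -Δ ω ≤ (⌈-Δ ω⌉₊ : ℝ) := Nat.le_ceil _
      have h4 : W ω - z ≤ ((⌈-Δ ω⌉₊ : ℕ) : ℝ) := le_trans h1 h3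
      have := le_min h2 h4
      linarith
    have hmonoB : Monotone (fun m : ℕ =>
        {ω | z < W ω ∧ W ω ≤ z + min (max (-Δ ω) 0) (m:ℝ)}) := by
      intro m m' hmm' ω hω
      simp only [Set.mem_setOf_eq] at hω ⊢
      refine ⟨hω.1, le_trans hω.2 ?_⟩
      have : min (max (-Δ ω) 0) (m:ℝ) ≤ min (max (-Δ ω) 0) (m':ℝ) :=
        min_le_min le_rfl (by exact_mod_cast hmm')
      linarith
    have huni : μ ({ω | T ω ≤ z} \ {ω | W ω ≤ z}) ≤ ENNReal.ofReal C := by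
      refine le_trans (measure_mono hsub) ?_
      rw [hmonoB.directed_le.measure_iUnion]
      refine iSup_le (fun m => ?_)
      exact (ENNReal.le_ofReal_iff_toReal_le (measure_ne_top μ _) hC0).mpr (hBle m)
    have hd : (μ ({ω | T ω ≤ z} \ {ω | W ω ≤ z})).toReal ≤ C :=
      ENNReal.toReal_le_of_le_ofReal hC0 huni
    have hmle : μ {ω | T ω ≤ z} ≤ μ {ω | W ω ≤ z}
        + μ ({ω | T ω ≤ z} \ {ω | W ω ≤ z}) := by
      refine le_trans (measure_mono ?_) (measure_union_le _ _)
      intro ω hω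
      by_cases hc : ω ∈ {ω | W ω ≤ z}
      · exact Set.mem_union_left _ hc
      · exact Set.mem_union_right _ ⟨hω, hc⟩
    have hfin1 : μ {ω | W ω ≤ z} ≠ ⊤ := measure_ne_top μ _
    have hfin2 : μ ({ω | T ω ≤ z} \ {ω | W ω ≤ z}) ≠ ⊤ := measure_ne_top μ _
    have hmono2 := ENNReal.toReal_mono (ENNReal.add_ne_top.mpr ⟨hfin1, hfin2⟩) hmle
    rw [ENNReal.toReal_add hfin1 hfin2] at hmono2
    linarith
  have side2 : (μ {ω | W ω ≤ z}).toReal - (μ {ω | T ω ≤ z}).toReal ≤ C := by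
    have hBle : ∀ m : ℕ, (μ {ω | z - min (max (Δ ω) 0) (m:ℝ) < W ω ∧
        W ω ≤ z}).toReal ≤ C := by
      intro m
      have hUmm : Measurable (fun ω => min (max (Δ ω) 0) (m:ℝ)) :=
        (hΔ.max measurable_const).min measurable_const
      have hindUV : ∀ i, IndepFun (X i) (fun ω => (min (max (Δi i ω) 0) (m:ℝ),
          (fun (_ : Ω) => (0:ℝ)) ω, W ω - g i (X i ω))) μ := by
        intro i
        have hψ : Measurable (fun p : ℝ × ℝ =>
            (min (max p.1 0) (m:ℝ), (0:ℝ), p.2)) :=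
          (((measurable_fst.max measurable_const).min measurable_const)).prodMk
            (measurable_const.prodMk measurable_snd)
        exact (hindepΔi i).comp measurable_id hψ
      have hcore := concentration_core μ n X g hmeasX hmeasg hindep hint hint2 hint3
        hmean hvar W hW β hβ hβpos hle z (m:ℝ) (Nat.cast_nonneg m)
        (fun ω => min (max (Δ ω) 0) (m:ℝ)) (fun _ => 0)
        hUmm measurable_const
        (fun ω => le_min (le_max_right _ _) (Nat.cast_nonneg m))
        (fun ω => le_refl 0)
        (fun ω => min_le_right _ _) (fun ω => Nat.cast_nonneg m)
        (fun i ω => min (max (Δi i ω) 0) (m:ℝ)) (fun i _ => 0)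
        (fun i => ((hmeasΔi i).max measurable_const).min measurable_const)
        (fun i => measurable_const)
        (fun i ω => le_min (le_max_right _ _) (Nat.cast_nonneg m))
        (fun i ω => le_refl 0)
        (fun i ω => min_le_right _ _) (fun i ω => Nat.cast_nonneg m)
        hindUV
      simp only [sub_zero, zero_add, add_zero, sub_self, abs_zero] at hcore
      have hcmp1 : ∫ ω, min (max (Δ ω) 0) (m:ℝ) * |W ω| ∂μ
          ≤ ∫ ω, |W ω * Δ ω| ∂μ := by
        have hpt : ∀ ω, min (max (Δ ω) 0) (m:ℝ) * |W ω| ≤ |W ω * Δ ω| := by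
          intro ω
          have h1 : min (max (Δ ω) 0) (m:ℝ) ≤ |Δ ω| :=
            le_trans (min_le_left _ _) (max_le (le_abs_self _) (abs_nonneg _))
          have h2 : min (max (Δ ω) 0) (m:ℝ) * |W ω| ≤ |Δ ω| * |W ω| :=
            mul_le_mul_of_nonneg_right h1 (abs_nonneg _)
          rw [abs_mul]
          linarith
        refine integral_mono ?_ hintWΔ.abs hpt
        refine Integrable.bdd_mul hWint.abs hUmm.aestronglyMeasurable (c := (m:ℝ)) (Filter.Eventually.of_forall fun ω => ?_)
        rw [Real.norm_eq_abs, abs_of_nonneg (le_min (le_max_right _ _) (Nat.cast_nonneg m))]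
        exact min_le_right _ _
      have hcmp2 : ∀ i ∈ Finset.univ,
          ∫ ω, |min (max (Δ ω) 0) (m:ℝ) - min (max (Δi i ω) 0) (m:ℝ)| * |g i (X i ω)| ∂μ
          ≤ ∫ ω, |g i (X i ω) * (Δ ω - Δi i ω)| ∂μ := by
        intro i _
        have hpt : ∀ ω, |min (max (Δ ω) 0) (m:ℝ) - min (max (Δi i ω) 0) (m:ℝ)|
            * |g i (X i ω)| ≤ |g i (X i ω) * (Δ ω - Δi i ω)| := by
          intro ω
          have h1 : |min (max (Δ ω) 0) (m:ℝ) - min (max (Δi i ω) 0) (m:ℝ)|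
              ≤ |Δ ω - Δi i ω| := trunc_lip (m:ℝ) (Δ ω) (Δi i ω)
          have h2 := mul_le_mul_of_nonneg_right h1 (abs_nonneg (g i (X i ω)))
          rw [abs_mul]
          linarith
        have hmL : Measurable (fun ω =>
            |min (max (Δ ω) 0) (m:ℝ) - min (max (Δi i ω) 0) (m:ℝ)| * |g i (X i ω)|) :=
          ((((hΔ.max measurable_const).min measurable_const).sub
            (((hmeasΔi i).max measurable_const).min measurable_const)).abs).mul
            (((hmeasg i).comp (hmeasX i)).abs)
        have hintL : Integrable (fun ω =>
            |min (max (Δ ω) 0) (m:ℝ) - min (max (Δi i ω) 0) (m:ℝ)| * |g i (X i ω)|) μ := by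
          refine Integrable.mono (hintgΔ i).abs hmL.aestronglyMeasurable ?_
          refine Filter.Eventually.of_forall (fun ω => ?_)
          rw [Real.norm_eq_abs, Real.norm_eq_abs, abs_abs,
            abs_of_nonneg (mul_nonneg (abs_nonneg _) (abs_nonneg _))]
          exact hpt ω
        exact integral_mono hintL (hintgΔ i).abs hpt
      have := Finset.sum_le_sum hcmp2
      rw [hCdef]
      linarith [hcore, hcmp1, this]
    have hsub : {ω | W ω ≤ z} \ {ω | T ω ≤ z} ⊆
        ⋃ m : ℕ, {ω | z - min (max (Δ ω) 0) (m:ℝ) < W ω ∧ W ω ≤ z} := by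
      rintro ω ⟨hWz, hTz⟩
      simp only [Set.mem_setOf_eq, not_le] at hTz hWz
      refine Set.mem_iUnion.mpr ⟨⌈Δ ω⌉₊, ?_⟩
      simp only [Set.mem_setOf_eq]
      have hTW : z < W ω + Δ ω := by rw [← hT ω]; exact hTz
      refine ⟨?_, hWz⟩
      have h1 : z - W ω < Δ ω := by linarith
      have h2 : z - W ω < max (Δ ω) 0 := lt_of_lt_of_le h1 (le_max_left _ _)
      have h3 : Δ ω ≤ ((⌈Δ ω⌉₊ : ℕ) : ℝ) := Nat.le_ceil _
      have h4 : z - W ω < ((⌈Δ ω⌉₊ : ℕ) : ℝ) := lt_of_lt_of_le h1 h3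
      have := lt_min h2 h4
      linarith
    have hmonoB : Monotone (fun m : ℕ =>
        {ω | z - min (max (Δ ω) 0) (m:ℝ) < W ω ∧ W ω ≤ z}) := by
      intro m m' hmm' ω hω
      simp only [Set.mem_setOf_eq] at hω ⊢
      refine ⟨lt_of_le_of_lt ?_ hω.1, hω.2⟩
      have : min (max (Δ ω) 0) (m:ℝ) ≤ min (max (Δ ω) 0) (m':ℝ) :=
        min_le_min le_rfl (by exact_mod_cast hmm')
      linarith
    have huni : μ ({ω | W ω ≤ z} \ {ω | T ω ≤ z}) ≤ ENNReal.ofReal C := by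
      refine le_trans (measure_mono hsub) ?_
      rw [hmonoB.directed_le.measure_iUnion]
      refine iSup_le (fun m => ?_)
      exact (ENNReal.le_ofReal_iff_toReal_le (measure_ne_top μ _) hC0).mpr (hBle m)
    have hd : (μ ({ω | W ω ≤ z} \ {ω | T ω ≤ z})).toReal ≤ C :=
      ENNReal.toReal_le_of_le_ofReal hC0 huni
    have hmle : μ {ω | W ω ≤ z} ≤ μ {ω | T ω ≤ z}
        + μ ({ω | W ω ≤ z} \ {ω | T ω ≤ z}) := by
      refine le_trans (measure_mono ?_) (measure_union_le _ _)
      intro ω hω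
      by_cases hc : ω ∈ {ω | T ω ≤ z}
      · exact Set.mem_union_left _ hc
      · exact Set.mem_union_right _ ⟨hω, hc⟩
    have hfin1 : μ {ω | T ω ≤ z} ≠ ⊤ := measure_ne_top μ _
    have hfin2 : μ ({ω | W ω ≤ z} \ {ω | T ω ≤ z}) ≠ ⊤ := measure_ne_top μ _
    have hmono2 := ENNReal.toReal_mono (ENNReal.add_ne_top.mpr ⟨hfin1, hfin2⟩) hmle
    rw [ENNReal.toReal_add hfin1 hfin2] at hmono2
    linarith
  exact abs_sub_le_iff.mpr ⟨side1, side2⟩
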